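/- Let A be an algebra over 𝕂 which is both a bounded and a locally convex algebra, and let M be a right and N a left A-module that are both bounded and locally convex A-modules. If M and N are metrizable, then M ⊗_A^π N = M ⊗_A^β N, i.e., the projective and the bornological tensor product topologies on the quotient coincide. -/

import Mathlib

/-!
STATEMENT 19: if `M` and `N` are metrizable (bounded and locally convex) modules
over an algebra `A` which is both a bounded and a locally convex algebra, then
`M ⊗_A^π N = M ⊗_A^β N`: the projective and bornological tensor product topologies
coincide (also on the quotients).
-/

open MulOpposite Set
open scoped TensorProduct Pointwise

/-- Convexity expressed through the real scalars of `𝕜` (`𝕜` = ℝ or ℂ). -/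
def RCConvex (𝕜 : Type*) [RCLike 𝕜] {E : Type*} [AddCommGroup E] [Module 𝕜 E]
    (s : Set E) : Prop :=
  ∀ ⦃x⦄, x ∈ s → ∀ ⦃y⦄, y ∈ s → ∀ t : ℝ, 0 ≤ t → t ≤ 1 →
    ((t : 𝕜) • x + (((1 - t : ℝ) : 𝕜)) • y) ∈ s

/-- `τ` is a linear topology: addition and scalar multiplication continuous. -/
def IsLinearTop (𝕜 : Type*) [RCLike 𝕜] (E : Type*) [AddCommGroup E] [Module 𝕜 E]
    (τ : TopologicalSpace E) : Prop :=
  @IsTopologicalAddGroup E τ _ ∧ @ContinuousSMul 𝕜 E _ _ τ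

/-- `τ` is a locally convex topology. -/
def IsLCTop (𝕜 : Type*) [RCLike 𝕜] (E : Type*) [AddCommGroup E] [Module 𝕜 E]
    (τ : TopologicalSpace E) : Prop :=
  IsLinearTop 𝕜 E τ ∧ ∀ U ∈ @nhds E τ 0, ∃ V ∈ @nhds E τ 0, V ⊆ U ∧ RCConvex 𝕜 V

/-- von Neumann boundedness for an explicitly given topology. -/
def VNBdd (𝕜 : Type*) [RCLike 𝕜] {E : Type*} [AddCommGroup E] [Module 𝕜 E]
    (τ : TopologicalSpace E) (s : Set E) : Prop :=
  ∀ V ∈ @nhds E τ 0, Absorbs 𝕜 V s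

/-- `f` maps von Neumann bounded sets to von Neumann bounded sets. -/
def BddMap (𝕜 : Type*) [RCLike 𝕜] {E F : Type*} [AddCommGroup E] [Module 𝕜 E]
    [AddCommGroup F] [Module 𝕜 F]
    (τE : TopologicalSpace E) (τF : TopologicalSpace F) (f : E → F) : Prop :=
  ∀ s : Set E, VNBdd 𝕜 τE s → VNBdd 𝕜 τF (f '' s)

/-- A family `S` of maps is (equi-)bounded: this is exactly von Neumann boundedness
of `S` in the topology of uniform convergence on bounded sets. -/
def FamBdd (𝕜 : Type*) [RCLike 𝕜] {E F : Type*} [AddCommGroup E] [Module 𝕜 E]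
    [AddCommGroup F] [Module 𝕜 F]
    (τE : TopologicalSpace E) (τF : TopologicalSpace F) (S : Set (E → F)) : Prop :=
  ∀ s : Set E, VNBdd 𝕜 τE s → VNBdd 𝕜 τF (⋃ f ∈ S, f '' s)

/-- `𝕜`-bilinearity of a map on a product. -/
def IsBilinMap (𝕜 : Type*) [RCLike 𝕜] {M N E : Type*} [AddCommGroup M] [Module 𝕜 M]
    [AddCommGroup N] [Module 𝕜 N] [AddCommGroup E] [Module 𝕜 E]
    (f : M × N → E) : Prop :=
  (∀ m m' n, f (m + m', n) = f (m, n) + f (m', n)) ∧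
  (∀ (c : 𝕜) m n, f (c • m, n) = c • f (m, n)) ∧
  (∀ m n n', f (m, n + n') = f (m, n) + f (m, n')) ∧
  (∀ (c : 𝕜) m n, f (m, c • n) = c • f (m, n))

/-- `f` is `A`-balanced: `f (m·a, n) = f (m, a·n)`; the right `A`-module structure
on `M` is given by a `Aᵐᵒᵖ`-module structure. -/
def IsBalancedMap (A : Type*) [Ring A] {M N E : Type*} [AddCommGroup M]
    [Module Aᵐᵒᵖ M] [AddCommGroup N] [Module A N] (f : M × N → E) : Prop :=
  ∀ (a : A) (m : M) (n : N), f (op a • m, n) = f (m, a • n)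

/-- `τ` is the projective tensor product topology on `M ⊗[𝕜] N`: the finest locally
convex topology making the canonical bilinear map continuous. -/
def IsProjTensorTop (𝕜 : Type*) [RCLike 𝕜] {M N : Type*} [AddCommGroup M] [Module 𝕜 M]
    [AddCommGroup N] [Module 𝕜 N] (τM : TopologicalSpace M) (τN : TopologicalSpace N)
    (τ : TopologicalSpace (TensorProduct 𝕜 M N)) : Prop :=
  IsLCTop 𝕜 (TensorProduct 𝕜 M N) τ ∧
  @Continuous (M × N) (TensorProduct 𝕜 M N) (@instTopologicalSpaceProd M N τM τN) τ
    (fun p => p.1 ⊗ₜ[𝕜] p.2) ∧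
  ∀ τ' : TopologicalSpace (TensorProduct 𝕜 M N), IsLCTop 𝕜 (TensorProduct 𝕜 M N) τ' →
    @Continuous (M × N) (TensorProduct 𝕜 M N) (@instTopologicalSpaceProd M N τM τN) τ'
      (fun p => p.1 ⊗ₜ[𝕜] p.2) → τ ≤ τ'

/-- `τ` is the bornological tensor product topology on `M ⊗[𝕜] N`: the finest locally
convex topology making the canonical bilinear map bounded. -/
def IsBetaTensorTop (𝕜 : Type*) [RCLike 𝕜] {M N : Type*} [AddCommGroup M] [Module 𝕜 M]
    [AddCommGroup N] [Module 𝕜 N] (τM : TopologicalSpace M) (τN : TopologicalSpace N)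
    (τ : TopologicalSpace (TensorProduct 𝕜 M N)) : Prop :=
  IsLCTop 𝕜 (TensorProduct 𝕜 M N) τ ∧
  BddMap 𝕜 (@instTopologicalSpaceProd M N τM τN) τ (fun p : M × N => p.1 ⊗ₜ[𝕜] p.2) ∧
  ∀ τ' : TopologicalSpace (TensorProduct 𝕜 M N), IsLCTop 𝕜 (TensorProduct 𝕜 M N) τ' →
    BddMap 𝕜 (@instTopologicalSpaceProd M N τM τN) τ' (fun p : M × N => p.1 ⊗ₜ[𝕜] p.2) →
      τ ≤ τ'

/-- The subspace `J₀` of `M ⊗[𝕜] N` spanned by the elements `m·a ⊗ n - m ⊗ a·n`. -/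
def balancedRel (𝕜 A : Type*) [RCLike 𝕜] [Ring A] [Algebra 𝕜 A] (M N : Type*)
    [AddCommGroup M] [Module 𝕜 M] [Module Aᵐᵒᵖ M]
    [AddCommGroup N] [Module 𝕜 N] [Module A N] :
    Submodule 𝕜 (TensorProduct 𝕜 M N) :=
  Submodule.span 𝕜
    {x | ∃ (a : A) (m : M) (n : N), x = (op a • m) ⊗ₜ[𝕜] n - m ⊗ₜ[𝕜] (a • n)}

/-- The subspace `J₀` for modules over a commutative algebra `A`. -/
def balancedRelComm (𝕜 A : Type*) [RCLike 𝕜] [CommRing A] [Algebra 𝕜 A] (M N : Type*)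
    [AddCommGroup M] [Module 𝕜 M] [Module A M]
    [AddCommGroup N] [Module 𝕜 N] [Module A N] :
    Submodule 𝕜 (TensorProduct 𝕜 M N) :=
  Submodule.span 𝕜
    {x | ∃ (a : A) (m : M) (n : N), x = (a • m) ⊗ₜ[𝕜] n - m ⊗ₜ[𝕜] (a • n)}

section Aux

open Filter Topology Bornology

variable {𝕜 : Type*} [RCLike 𝕜]

/-- An auxiliary strictly monotone sequence dominating `Mf`. -/
private def auxSeq (Mf : ℕ → ℕ) : ℕ → ℕ
  | 0 => Mf 0
  | k + 1 => max (auxSeq Mf k + 1) (Mf (k + 1))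

/-- An auxiliary "greatest index" function. -/
private def auxIdx (Mf : ℕ → ℕ) (n : ℕ) : ℕ :=
  Nat.findGreatest (fun k => auxSeq Mf k ≤ n) n

/-- In a first-countable space with continuous scalar multiplication, every null sequence can be
multiplied by natural scalars tending to infinity while still tending to zero. -/
theorem aux_escape {E : Type*} [AddCommGroup E] [Module 𝕜 E] [TopologicalSpace E]
    [FirstCountableTopology E] [ContinuousSMul 𝕜 E] {u : ℕ → E}
    (hu : Tendsto u atTop (𝓝 0)) :
    ∃ c : ℕ → ℕ, Tendsto c atTop atTop ∧
      Tendsto (fun n => ((c n : 𝕜)) • u n) atTop (𝓝 (0 : E)) := by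
  obtain ⟨V, hV⟩ := (𝓝 (0 : E)).exists_antitone_basis
  have hsm : ∀ k : ℕ, Tendsto (fun n => ((k : 𝕜)) • u n) atTop (𝓝 (0 : E)) := by
    intro k
    simpa using hu.const_smul ((k : 𝕜))
  have hMex : ∀ k : ℕ, ∃ m : ℕ, ∀ n ≥ m, ((k : 𝕜)) • u n ∈ V k := by
    intro k
    exact eventually_atTop.mp ((hsm k).eventually_mem (hV.1.mem_of_mem trivial))
  choose Mf hMf using hMex
  -- a strictly monotone dominating sequence
  set N : ℕ → ℕ := auxSeq Mf with hNdef
  have hNsucc : ∀ k, N k + 1 ≤ N (k + 1) := fun k => le_max_left _ _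
  have hNmono : StrictMono N := strictMono_nat_of_lt_succ fun k => hNsucc k
  have hNk : ∀ k, k ≤ N k := by
    intro k
    induction k with
    | zero => exact Nat.zero_le _
    | succ k ih => exact Nat.succ_le_of_lt (lt_of_le_of_lt ih (hNmono (Nat.lt_succ_self k)))
  have hMfN : ∀ k, Mf k ≤ N k := by
    intro k
    cases k with
    | zero => exact le_rfl
    | succ k => exact le_max_right _ _
  set c : ℕ → ℕ := auxIdx Mf with hc
  have hcge : ∀ k n, N k ≤ n → k ≤ c n := fun k n h =>
    Nat.le_findGreatest (P := fun k => auxSeq Mf k ≤ n) (le_trans (hNk k) h) h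
  have hcN : ∀ n, N 0 ≤ n → N (c n) ≤ n := by
    intro n hn
    exact Nat.findGreatest_spec (P := fun k => auxSeq Mf k ≤ n) (m := 0) (Nat.zero_le n) hn
  refine ⟨c, ?_, ?_⟩
  · rw [tendsto_atTop_atTop]
    intro b
    exact ⟨N b, fun n hn => hcge b n hn⟩
  · rw [hV.1.tendsto_right_iff]
    intro i _
    filter_upwards [eventually_ge_atTop (max (N i) (N 0))] with n hn
    have h1 : N i ≤ n := le_trans (le_max_left _ _) hn
    have h2 : N 0 ≤ n := le_trans (le_max_right _ _) hn
    have hmem : ((c n : 𝕜)) • u n ∈ V (c n) :=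
      hMf (c n) n (le_trans (hMfN (c n)) (hcN n h2))
    exact hV.2 (hcge i n h1) hmem

/-- A sequence absorbed into a bounded set by scalars of norm tending to infinity tends to zero. -/
theorem aux_tendsto_zero {T : Type*} [AddCommGroup T] [Module 𝕜 T]
    (τT : TopologicalSpace T) {B : Set T}
    (hB : ∀ V ∈ @nhds T τT 0, Absorbs 𝕜 V B)
    {w : ℕ → T} {d : ℕ → 𝕜} (hd : Tendsto (fun n => ‖d n‖) atTop atTop)
    (hw : ∀ n, d n • w n ∈ B) :
    Tendsto w atTop (@nhds T τT 0) := by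
  rw [Filter.tendsto_def]
  intro V hV
  obtain ⟨r, hr⟩ := absorbs_iff_norm.mp (hB V hV)
  have hev : ∀ᶠ n in atTop, max r 1 ≤ ‖d n‖ := hd.eventually_ge_atTop (max r 1)
  filter_upwards [hev] with n hn
  have hd0 : d n ≠ 0 := by
    intro h
    rw [h, norm_zero] at hn
    exact absurd (le_trans (le_max_right r 1) hn) (by norm_num)
  have hsub : B ⊆ d n • V := hr (d n) (le_trans (le_max_left r 1) hn)
  obtain ⟨v, hv, hveq⟩ := Set.mem_smul_set.mp (hsub (hw n))
  have : v = w n := by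
    have := smul_right_injective T hd0 hveq
    exact this
  simpa [this] using hv

/-- A bounded bilinear map on a product of metrizable spaces is continuous. -/
theorem aux_bdd_continuous {M N T : Type*}
    [AddCommGroup M] [Module 𝕜 M] [AddCommGroup N] [Module 𝕜 N]
    [AddCommGroup T] [Module 𝕜 T]
    [TopologicalSpace M] [TopologicalSpace.MetrizableSpace M]
    [IsTopologicalAddGroup M] [ContinuousSMul 𝕜 M]
    [TopologicalSpace N] [TopologicalSpace.MetrizableSpace N]
    [IsTopologicalAddGroup N] [ContinuousSMul 𝕜 N]
    (τT : TopologicalSpace T) (hT : IsLinearTop 𝕜 T τT)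
    {f : M × N → T} (hf : IsBilinMap 𝕜 f)
    (hb : BddMap 𝕜 (inferInstance : TopologicalSpace (M × N)) τT f) :
    @Continuous (M × N) T _ τT f := by
  letI := τT
  haveI : IsTopologicalAddGroup T := hT.1
  obtain ⟨hadd, hsmul, hadd', hsmul'⟩ := hf
  apply SeqContinuous.continuous
  intro p q hp
  set x₀ := q.1 with hx₀
  set y₀ := q.2 with hy₀
  set u : ℕ → M := fun n => (p n).1 - x₀ with hud
  set v : ℕ → N := fun n => (p n).2 - y₀ with hvd
  have hu : Tendsto u atTop (𝓝 (0 : M)) := by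
    have h1 : Tendsto (fun n => (p n).1) atTop (𝓝 x₀) := (continuous_fst.tendsto q).comp hp
    simpa using h1.sub_const x₀
  have hv : Tendsto v atTop (𝓝 (0 : N)) := by
    have h1 : Tendsto (fun n => (p n).2) atTop (𝓝 y₀) := (continuous_snd.tendsto q).comp hp
    simpa using h1.sub_const y₀
  have hz : Tendsto (fun n => ((u n, v n) : M × N)) atTop (𝓝 (0 : M × N)) := by
    rw [Prod.tendsto_iff]
    exact ⟨hu, hv⟩
  obtain ⟨c, hcinf, hc0⟩ := aux_escape (𝕜 := 𝕜) hz
  have hcu : Tendsto (fun n => ((c n : 𝕜)) • u n) atTop (𝓝 (0 : M)) := by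
    have := (continuous_fst.tendsto (0 : M × N)).comp hc0
    simpa [Function.comp_def] using this
  have hcv : Tendsto (fun n => ((c n : 𝕜)) • v n) atTop (𝓝 (0 : N)) := by
    have := (continuous_snd.tendsto (0 : M × N)).comp hc0
    simpa [Function.comp_def] using this
  -- scalar norms tending to infinity
  have hcR : Tendsto (fun n => ((c n : ℝ))) atTop atTop :=
    tendsto_natCast_atTop_atTop.comp hcinf
  have hd1 : Tendsto (fun n => ‖((c n : 𝕜))‖) atTop atTop := by
    simpa [RCLike.norm_natCast] using hcR
  have hd2 : Tendsto (fun n => ‖((c n : 𝕜)) ^ 2‖) atTop atTop := by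
    have : Tendsto (fun n => ((c n : ℝ)) ^ 2) atTop atTop :=
      hcR.atTop_mul_atTop₀ hcR |>.congr (fun n => (sq ((c n : ℝ))).symm)
    simpa [norm_pow, RCLike.norm_natCast] using this
  -- three bounded ranges
  have key : ∀ (g : ℕ → M × N), Tendsto g atTop (𝓝 (g 0)) → True := fun _ _ => trivial
  have mkB : ∀ (g : ℕ → M × N) (l : M × N), Tendsto g atTop (𝓝 l) →
      ∀ V ∈ @nhds T τT 0, Absorbs 𝕜 V (f '' Set.range g) := by
    intro g l hg
    have hrange : Bornology.IsVonNBounded 𝕜 (Set.range g) := hg.isVonNBounded_range 𝕜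
    have := hb (Set.range g) (fun V hV => hrange hV)
    exact this
  have term1 : Tendsto (fun n => f (u n, v n)) atTop (𝓝 (0 : T)) := by
    refine aux_tendsto_zero (𝕜 := 𝕜) τT
      (mkB (fun n => (((c n : 𝕜)) • u n, ((c n : 𝕜)) • v n)) (0 : M × N) ?_) hd2 ?_
    · rw [Prod.tendsto_iff]; exact ⟨hcu, hcv⟩
    · intro n
      refine ⟨_, Set.mem_range_self n, ?_⟩
      rw [hsmul, hsmul', smul_smul, sq]
  have term2 : Tendsto (fun n => f (u n, y₀)) atTop (𝓝 (0 : T)) := by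
    refine aux_tendsto_zero (𝕜 := 𝕜) τT
      (mkB (fun n => (((c n : 𝕜)) • u n, y₀)) ((0 : M), y₀) ?_) hd1 ?_
    · rw [Prod.tendsto_iff]; exact ⟨hcu, tendsto_const_nhds⟩
    · intro n
      refine ⟨_, Set.mem_range_self n, ?_⟩
      rw [hsmul]
  have term3 : Tendsto (fun n => f (x₀, v n)) atTop (𝓝 (0 : T)) := by
    refine aux_tendsto_zero (𝕜 := 𝕜) τT
      (mkB (fun n => (x₀, ((c n : 𝕜)) • v n)) (x₀, (0 : N)) ?_) hd1 ?_
    · rw [Prod.tendsto_iff]; exact ⟨tendsto_const_nhds, hcv⟩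
    · intro n
      refine ⟨_, Set.mem_range_self n, ?_⟩
      rw [hsmul']
  have hdecomp : ∀ n, f (p n) =
      f (x₀, y₀) + (f (x₀, v n) + (f (u n, y₀) + f (u n, v n))) := by
    intro n
    have h1 : p n = (x₀ + u n, y₀ + v n) := by
      simp [hud, hvd]
    rw [h1, hadd, hadd' x₀, hadd' (u n)]
    abel
  have hlim : Tendsto (fun n => f (p n)) atTop (𝓝 (f (x₀, y₀) + (0 + (0 + 0)))) := by
    simp only [hdecomp]
    exact tendsto_const_nhds.add (term3.add (term2.add term1))
  have hq : f q = f (x₀, y₀) := by rw [hx₀, hy₀]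
  simpa [hq, Function.comp_def] using hlim

/-- A continuous bilinear map is bounded. -/
theorem aux_cont_bdd {M N T : Type*}
    [AddCommGroup M] [Module 𝕜 M] [AddCommGroup N] [Module 𝕜 N]
    [AddCommGroup T] [Module 𝕜 T]
    [TopologicalSpace M] [TopologicalSpace N]
    (τT : TopologicalSpace T) {f : M × N → T} (hf : IsBilinMap 𝕜 f)
    (hc : @Continuous (M × N) T _ τT f) :
    BddMap 𝕜 (inferInstance : TopologicalSpace (M × N)) τT f := by
  letI := τT
  obtain ⟨hadd, hsmul, hadd', hsmul'⟩ := hf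
  have h0 : f (0, 0) = 0 := by
    have := hsmul 0 0 0
    simpa using this
  intro s hs V hV
  have hV0 : f ⁻¹' V ∈ 𝓝 ((0, 0) : M × N) := by
    have hca : Filter.Tendsto f (𝓝 ((0, 0) : M × N)) (𝓝 (f (0, 0))) := hc.continuousAt
    rw [h0] at hca
    exact hca hV
  rw [nhds_prod_eq] at hV0
  obtain ⟨U, hU, W, hW, hUW⟩ := Filter.mem_prod_iff.mp hV0
  -- the two projections of s are absorbed by U and W
  have habs1 : Absorbs 𝕜 U (Prod.fst '' s) := by
    have := hs (U ×ˢ (Set.univ : Set N)) (by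
      rw [nhds_prod_eq]; exact Filter.prod_mem_prod hU Filter.univ_mem)
    obtain ⟨r, hr⟩ := absorbs_iff_norm.mp this
    refine absorbs_iff_norm.mpr ⟨r, fun e he x hx => ?_⟩
    obtain ⟨⟨m, n⟩, hmn, rfl⟩ := hx
    obtain ⟨y, hy, hyeq⟩ := Set.mem_smul_set.mp (hr e he hmn)
    exact ⟨y.1, hy.1, congrArg Prod.fst hyeq⟩
  have habs2 : Absorbs 𝕜 W (Prod.snd '' s) := by
    have := hs ((Set.univ : Set M) ×ˢ W) (by
      rw [nhds_prod_eq]; exact Filter.prod_mem_prod Filter.univ_mem hW)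
    obtain ⟨r, hr⟩ := absorbs_iff_norm.mp this
    refine absorbs_iff_norm.mpr ⟨r, fun e he x hx => ?_⟩
    obtain ⟨⟨m, n⟩, hmn, rfl⟩ := hx
    obtain ⟨y, hy, hyeq⟩ := Set.mem_smul_set.mp (hr e he hmn)
    exact ⟨y.2, hy.2, congrArg Prod.snd hyeq⟩
  obtain ⟨r₁, hr₁⟩ := absorbs_iff_norm.mp habs1
  obtain ⟨r₂, hr₂⟩ := absorbs_iff_norm.mp habs2
  set a : 𝕜 := ((max r₂ 1 : ℝ) : 𝕜) with hadef
  have hanorm : ‖a‖ = max r₂ 1 := by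
    rw [hadef, RCLike.norm_ofReal, abs_of_pos (lt_of_lt_of_le one_pos (le_max_right r₂ 1))]
  have hapos : (0 : ℝ) < ‖a‖ := by rw [hanorm]; exact lt_of_lt_of_le one_pos (le_max_right r₂ 1)
  have ha0 : a ≠ 0 := by
    intro h; rw [h, norm_zero] at hapos; exact lt_irrefl 0 hapos
  refine absorbs_iff_norm.mpr ⟨(max r₁ 1) * ‖a‖, fun e he x hx => ?_⟩
  obtain ⟨⟨m, n⟩, hmn, rfl⟩ := hx
  have hnorm_e : r₁ ≤ ‖e * a⁻¹‖ := by
    rw [norm_mul, norm_inv, ← div_eq_mul_inv, le_div_iff₀ hapos]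
    calc r₁ * ‖a‖ ≤ (max r₁ 1) * ‖a‖ :=
          mul_le_mul_of_nonneg_right (le_max_left r₁ 1) (le_of_lt hapos)
      _ ≤ ‖e‖ := he
  have hm : m ∈ (e * a⁻¹) • U := hr₁ (e * a⁻¹) hnorm_e ⟨(m, n), hmn, rfl⟩
  have hn : n ∈ a • W := hr₂ a (by rw [hanorm]; exact le_max_left r₂ 1) ⟨(m, n), hmn, rfl⟩
  obtain ⟨um, hum, rfl⟩ := Set.mem_smul_set.mp hm
  obtain ⟨wn, hwn, rfl⟩ := Set.mem_smul_set.mp hn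
  have hfv : f (um, wn) ∈ V := hUW ⟨hum, hwn⟩
  refine Set.mem_smul_set.mpr ⟨f (um, wn), hfv, ?_⟩
  rw [hsmul, hsmul', smul_smul]
  rw [mul_assoc, inv_mul_cancel₀ ha0, mul_one]

end Aux


theorem statement19 {𝕜 : Type*} [RCLike 𝕜]
    (A : Type*) [Ring A] [Algebra 𝕜 A] [TopologicalSpace A] [T2Space A]
    (hA : IsLCTop 𝕜 A (inferInstance))
    (hAmulc : Continuous fun p : A × A => p.1 * p.2)
    (hAmulb : BddMap 𝕜 (inferInstance : TopologicalSpace (A × A)) (inferInstance)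
      (fun p : A × A => p.1 * p.2))
    -- M, a metrizable right A-module, both bounded and locally convex
    (M : Type*) [AddCommGroup M] [Module 𝕜 M] [Module Aᵐᵒᵖ M] [IsScalarTower 𝕜 Aᵐᵒᵖ M]
    [TopologicalSpace M] [T2Space M] [TopologicalSpace.MetrizableSpace M]
    (hM : IsLCTop 𝕜 M (inferInstance))
    (hMmodc : Continuous fun p : A × M => op p.1 • p.2)
    (hMmodb : BddMap 𝕜 (inferInstance : TopologicalSpace (A × M)) (inferInstance)
      (fun p : A × M => op p.1 • p.2))
    -- N, a metrizable left A-module, both bounded and locally convex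
    (N : Type*) [AddCommGroup N] [Module 𝕜 N] [Module A N] [IsScalarTower 𝕜 A N]
    [TopologicalSpace N] [T2Space N] [TopologicalSpace.MetrizableSpace N]
    (hN : IsLCTop 𝕜 N (inferInstance))
    (hNmodc : Continuous fun p : A × N => p.1 • p.2)
    (hNmodb : BddMap 𝕜 (inferInstance : TopologicalSpace (A × N)) (inferInstance)
      (fun p : A × N => p.1 • p.2))
    -- the two tensor product topologies and the corresponding closures of J₀
    (τβ τπ : TopologicalSpace (TensorProduct 𝕜 M N))
    (hτβ : IsBetaTensorTop 𝕜 (inferInstance) (inferInstance) τβ)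
    (hτπ : IsProjTensorTop 𝕜 (inferInstance) (inferInstance) τπ)
    (Jβ Jπ : Submodule 𝕜 (TensorProduct 𝕜 M N))
    (hJβ : (Jβ : Set (TensorProduct 𝕜 M N)) = @closure _ τβ (balancedRel 𝕜 A M N))
    (hJπ : (Jπ : Set (TensorProduct 𝕜 M N)) = @closure _ τπ (balancedRel 𝕜 A M N)) :
    τβ = τπ ∧ Jβ = Jπ ∧
      τβ.coinduced Jβ.mkQ = τπ.coinduced Jβ.mkQ := by
  haveI hMg : IsTopologicalAddGroup M := hM.1.1
  haveI hMs : ContinuousSMul 𝕜 M := hM.1.2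
  haveI hNg : IsTopologicalAddGroup N := hN.1.1
  haveI hNs : ContinuousSMul 𝕜 N := hN.1.2
  have hbil : IsBilinMap 𝕜 (fun p : M × N => p.1 ⊗ₜ[𝕜] p.2) :=
    ⟨fun m m' n => TensorProduct.add_tmul m m' n,
     fun c m n => (TensorProduct.smul_tmul' c m n).symm,
     fun m n n' => TensorProduct.tmul_add m n n',
     fun c m n => TensorProduct.tmul_smul c m n⟩
  have h1 : τβ ≤ τπ :=
    hτβ.2.2 τπ hτπ.1 (aux_cont_bdd (𝕜 := 𝕜) τπ hbil hτπ.2.1)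
  have h2 : τπ ≤ τβ :=
    hτπ.2.2 τβ hτβ.1 (aux_bdd_continuous (𝕜 := 𝕜) τβ hτβ.1.1 hbil hτβ.2.1)
  have hτ : τβ = τπ := le_antisymm h1 h2
  refine ⟨hτ, ?_, by rw [hτ]⟩
  apply SetLike.coe_injective
  rw [hJβ, hJπ, hτ]
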